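/- Let q₀ ≥ ⋯ ≥ q_{n−1} be reals, m ≥ 1, n ≥ 2m+1, b > 0, u = ⌊(n−m)/2⌋, and let w* satisfy q_u < w* ≤ (q_{⌊(n−m−1)/2⌋} + q_u)/2. Append the m values: w₍ₙ₎ = 2w* − q_u and w₍ₙ₊₁₎ = ⋯ = w₍ₙ₊ₘ₋₁₎ = q₀ + b. Then the median of the resulting n+m values equals w*. -/

import Mathlib

open Finset

/-- Median of a multiset of reals: average of the two middle order statistics
(equal to the middle one for odd cardinality). -/
noncomputable def med (s : Multiset ℝ) : ℝ :=
  ((s.sort (· ≤ ·)).getD ((Multiset.card s - 1) / 2) 0 +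
    (s.sort (· ≤ ·)).getD (Multiset.card s / 2) 0) / 2

/-- `m`-trimmed mean: remove the `m` largest and `m` smallest values and average the rest. -/
noncomputable def trimmedMean (m : ℕ) (s : Multiset ℝ) : ℝ :=
  ((((s.sort (· ≤ ·)).drop m).take (Multiset.card s - 2 * m)).sum) /
    ((Multiset.card s : ℝ) - 2 * m)

/-- The multiset of the first `n` values of `q`. -/
noncomputable def qMs (n : ℕ) (q : ℕ → ℝ) : Multiset ℝ :=
  (Finset.range n).val.map q

theorem stmt10 (n m : ℕ) (hm : 1 ≤ m) (hn : 2 * m + 1 ≤ n) (q : ℕ → ℝ)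
    (hq : ∀ i j, i ≤ j → j < n → q j ≤ q i) (b wstar : ℝ) (hb : 0 < b)
    (u : ℕ) (hu : u = (n - m) / 2)
    (hw1 : q u < wstar) (hw2 : wstar ≤ (q ((n - m - 1) / 2) + q u) / 2) :
    med (qMs n q + ({2 * wstar - q u} + Multiset.replicate (m - 1) (q 0 + b))) = wstar := by
  set x := 2 * wstar - q u with hxdef
  set c := q 0 + b with hcdef
  -- parity
  have heven : n - m = 2 * u := by
    rcases Nat.even_or_odd (n - m) with h | h
    · obtain ⟨t, ht⟩ := h; omega
    · exfalso
      obtain ⟨t, ht⟩ := h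
      have h1 : (n - m - 1) / 2 = u := by omega
      rw [h1] at hw2; linarith
  have hu1 : 1 ≤ u := by omega
  have hnu : n = 2 * u + m := by omega
  have hv : (n - m - 1) / 2 = u - 1 := by omega
  rw [hv] at hw2
  -- inequalities
  have hun : u < n := by omega
  have hxq : q u ≤ x := by simp only [hxdef]; linarith
  have hqx : x ≤ q (u - 1) := by simp only [hxdef]; linarith
  have hq0c : ∀ i, i < n → q i ≤ c := by
    intro i hi
    have := hq 0 i (Nat.zero_le i) hi
    simp only [hcdef]; linarith
  -- the explicit sorted list
  set B : List ℝ := ((List.range' (u+1) (n-1-u)).reverse).map q with hB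
  set C : List ℝ := ((List.range' 0 u).reverse).map q with hC
  set D : List ℝ := List.replicate (m-1) c with hD
  set L : List ℝ := B ++ q u :: x :: (C ++ D) with hL
  -- multiset equality
  have hrange : List.range n = (List.range' 0 u ++ [u]) ++ List.range' (u+1) (n-1-u) := by
    rw [List.range_eq_range']
    have h1 : List.range' 0 u ++ [u] = List.range' 0 (u+1) := by
      rw [List.range'_concat]; simp
    rw [h1]
    have := @List.range'_append 0 (u+1) (n-1-u) 1
    simp only [one_mul, Nat.zero_add] at this
    rw [this]
    congr 1
    omega
  have hms : (qMs n q + ({x} + Multiset.replicate (m - 1) c)) = (L : Multiset ℝ) := by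
    simp only [hL, hB, hC, hD, qMs]
    have : (Finset.range n).val = ((List.range n : List ℕ) : Multiset ℕ) := rfl
    rw [this, hrange, Multiset.map_coe]
    simp only [List.map_append, List.map_cons, ← Multiset.coe_add, ← Multiset.cons_coe,
      ← Multiset.coe_replicate, ← Multiset.map_coe, Multiset.coe_reverse]
    simp only [Multiset.coe_nil, Multiset.map_zero, ← Multiset.singleton_add]
    abel
  -- membership facts
  have memB : ∀ a ∈ B, ∃ i, u + 1 ≤ i ∧ i < n ∧ a = q i := by
    intro a ha
    simp only [hB, List.mem_map, List.mem_reverse, List.mem_range'] at ha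
    obtain ⟨i, ⟨k, hk, hik⟩, rfl⟩ := ha
    exact ⟨i, by omega, by omega, rfl⟩
  have memC : ∀ a ∈ C, ∃ i, i < u ∧ a = q i := by
    intro a ha
    simp only [hC, List.mem_map, List.mem_reverse, List.mem_range'] at ha
    obtain ⟨i, ⟨k, hk, hik⟩, rfl⟩ := ha
    exact ⟨i, by omega, rfl⟩
  -- bounds
  have hxc : x ≤ c := le_trans hqx (hq0c (u-1) (by omega))
  have hBsmall : ∀ a ∈ B, a ≤ q u := by
    intro a ha
    obtain ⟨i, hi1, hi2, rfl⟩ := memB a ha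
    exact hq u i (by omega) hi2
  have hClarge : ∀ a ∈ C, x ≤ a := by
    intro a ha
    obtain ⟨i, hi, rfl⟩ := memC a ha
    exact le_trans hqx (hq i (u-1) (by omega) (by omega))
  have hCc : ∀ a ∈ C, a ≤ c := by
    intro a ha
    obtain ⟨i, hi, rfl⟩ := memC a ha
    exact hq0c i (by omega)
  have hsB : B.Pairwise (· ≤ ·) := by
    rw [hB, List.pairwise_map, List.pairwise_reverse]
    refine (List.pairwise_lt_range' 1).imp_of_mem ?_
    intro a b ha hb hab
    simp only [List.mem_range'] at hb
    obtain ⟨k, hk, rfl⟩ := hb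
    exact hq a (u+1+1*k) (by omega) (by omega)
  have hsC : C.Pairwise (· ≤ ·) := by
    rw [hC, List.pairwise_map, List.pairwise_reverse]
    refine (List.pairwise_lt_range' 1).imp_of_mem ?_
    intro a b ha hb hab
    simp only [List.mem_range'] at hb
    obtain ⟨k, hk, rfl⟩ := hb
    exact hq a (0+1*k) (by omega) (by omega)
  have hsorted : L.Pairwise (· ≤ ·) := by
    rw [hL, List.pairwise_append]
    refine ⟨hsB, ?_, ?_⟩
    · rw [List.pairwise_cons]
      constructor
      · intro a ha
        simp only [List.mem_cons, List.mem_append] at ha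
        rcases ha with rfl | ha | ha
        · exact hxq
        · exact le_trans hxq (hClarge a ha)
        · rw [List.eq_of_mem_replicate ha]; exact le_trans hxq hxc
      rw [List.pairwise_cons]
      constructor
      · intro a ha
        rcases List.mem_append.mp ha with ha | ha
        · exact hClarge a ha
        · rw [List.eq_of_mem_replicate ha]; exact hxc
      rw [List.pairwise_append]
      refine ⟨hsC, ?_, ?_⟩
      · exact List.pairwise_replicate.mpr (Or.inr le_rfl)
      · intro a ha b hb
        rw [List.eq_of_mem_replicate hb]
        exact hCc a ha
    · intro a ha y hy
      have ha' := hBsmall a ha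
      simp only [List.mem_cons, List.mem_append] at hy
      rcases hy with rfl | rfl | hy | hy
      · exact ha'
      · exact le_trans ha' hxq
      · exact le_trans ha' (le_trans hxq (hClarge y hy))
      · rw [List.eq_of_mem_replicate hy]; exact le_trans ha' (le_trans hxq hxc)
  have hsort : (qMs n q + ({x} + Multiset.replicate (m-1) c)).sort (· ≤ ·) = L := by
    refine List.Perm.eq_of_pairwise' (Multiset.pairwise_sort ..) hsorted ?_
    rw [← Multiset.coe_eq_coe, Multiset.sort_eq, hms]
  have hcard : Multiset.card (qMs n q + ({x} + Multiset.replicate (m-1) c)) = n + m := by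
    simp [qMs]; omega
  have hBlen : B.length = u + m - 1 := by
    simp only [hB, List.length_map, List.length_reverse, List.length_range']
    omega
  rw [med, hsort, hcard]
  have h1 : (n + m - 1)/2 = u + m - 1 := by omega
  have h2 : (n + m)/2 = u + m := by omega
  rw [h1, h2]
  have g1 : L.getD (u + m - 1) 0 = q u := by
    rw [hL, List.getD_eq_getElem?_getD, List.getElem?_append_right (by omega)]
    rw [hBlen]
    simp
  have g2 : L.getD (u + m) 0 = x := by
    rw [hL, List.getD_eq_getElem?_getD, List.getElem?_append_right (by omega)]
    rw [hBlen]
    have : u + m - (u + m - 1) = 1 := by omega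
    rw [this]
    simp
  rw [g1, g2, hxdef]
  ring
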